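/- Let E be a real inner product space and Δ : E →ₗ[ℝ] E a linear map satisfying the compactness property. Then ker Δ is a finite-dimensional subspace of E. (Theorem 1, abstract form: the space of harmonic p-forms is finite-dimensional.) -/

import Mathlib

open scoped RealInnerProductSpace

/-- Theorem 1 (abstract form): if `Δ` satisfies the compactness property,
then `ker Δ` (the space of harmonic elements) is finite-dimensional. -/
theorem harmonic_space_finiteDimensional
    {E : Type*} [NormedAddCommGroup E] [InnerProductSpace ℝ E]
    (Δ : E →ₗ[ℝ] E)
    (hcompact : ∀ (α : ℕ → E) (c : ℝ), 0 < c → (∀ n, ‖α n‖ ≤ c) →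
      (∀ n, ‖Δ (α n)‖ ≤ c) → ∃ φ : ℕ → ℕ, StrictMono φ ∧ CauchySeq (α ∘ φ)) :
    FiniteDimensional ℝ (LinearMap.ker Δ) := by
  by_contra hfd
  set K := LinearMap.ker Δ with hK
  -- get a linearly independent sequence in K
  let b := Module.Basis.ofVectorSpace ℝ K
  have hinf : Infinite (Module.Basis.ofVectorSpaceIndex ℝ K) := by
    by_contra hfin
    rw [not_infinite_iff_finite] at hfin
    have : Fintype (Module.Basis.ofVectorSpaceIndex ℝ K) := Fintype.ofFinite _
    exact hfd (Module.Finite.of_basis b)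
  let g : ℕ ↪ Module.Basis.ofVectorSpaceIndex ℝ K := Infinite.natEmbedding _
  have hli : LinearIndependent ℝ (fun n : ℕ => b (g n)) :=
    b.linearIndependent.comp g g.injective
  -- orthonormalize
  let v : ℕ → K := InnerProductSpace.gramSchmidtNormed ℝ (fun n : ℕ => b (g n))
  have hon : Orthonormal ℝ v := InnerProductSpace.gramSchmidtNormed_orthonormal hli
  let α : ℕ → E := fun n => (v n : E)
  have hnorm : ∀ n, ‖α n‖ = 1 := fun n => hon.1 n
  have hker : ∀ n, Δ (α n) = 0 := fun n => (v n).2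
  obtain ⟨φ, hφ, hc⟩ := hcompact α 1 one_pos (fun n => (hnorm n).le)
    (fun n => by rw [hker n]; simp)
  -- orthonormal sequence has no Cauchy subsequence
  rw [Metric.cauchySeq_iff] at hc
  obtain ⟨N, hN⟩ := hc 1 one_pos
  have hne : φ (N + 1) ≠ φ N := (hφ (Nat.lt_succ_self N)).ne'
  have hinner : ⟪α (φ (N + 1)), α (φ N)⟫ = 0 := hon.2 hne
  have hsq : ‖α (φ (N + 1)) - α (φ N)‖ ^ 2 = 2 := by
    rw [norm_sub_sq_real, hinner, hnorm, hnorm]; ring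
  have hd := hN (N + 1) (Nat.le_succ N) N le_rfl
  simp only [Function.comp] at hd
  rw [dist_eq_norm] at hd
  have h0 : (0:ℝ) ≤ ‖α (φ (N + 1)) - α (φ N)‖ := norm_nonneg _
  nlinarith [hd, hsq]
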